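/- Let A be a monomial k-algebra. The Gelfand–Kirillov dimension of E(A) = Ext_A(k,k) is infinite if and only if the CPS graph Γ(A) contains two distinct directed circuits sharing a common vertex. -/

import Mathlib

/- Combinatorial model of a monomial algebra A = T(V)/I and its CPS graph Γ(A).
   Monomials of the tensor algebra on generators indexed by σ are lists over σ;
   the tensor product w ⊗ m is list concatenation w ++ m. -/

namespace CPS

/-- Monomials of the tensor algebra: words in the generators. -/
abbrev Mon (σ : Type) := List σ

/-- A monomial ideal, given by finitely many monomial generators of degree ≥ 2. -/
structure MonIdeal (σ : Type) where
  gens : Finset (Mon σ)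
  deg2 : ∀ r ∈ gens, 2 ≤ r.length

variable {σ : Type}

/-- Membership in the two-sided monomial ideal generated by `gens`. -/
def MonIdeal.Mem (I : MonIdeal σ) (m : Mon σ) : Prop :=
  ∃ a r b, r ∈ I.gens ∧ m = a ++ r ++ b

/-- 𝔄_m : the set of minimal left annihilating monomials of m
    (w ∉ I, w ⊗ m ∈ I, and no proper suffix of w left-annihilates m). -/
def Ann (I : MonIdeal σ) (m : Mon σ) : Set (Mon σ) :=
  {w | ¬ I.Mem m ∧ ¬ I.Mem w ∧ I.Mem (w ++ m) ∧
    ∀ w' : Mon σ, w' <:+ w → w' ≠ w → ¬ I.Mem (w' ++ m)}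

/-- Directed edges of the CPS graph Γ(A): m₁ → m₂ iff m₂ ∈ 𝔄_{m₁}. -/
def Edge (I : MonIdeal σ) (m₁ m₂ : Mon σ) : Prop := m₂ ∈ Ann I m₁

/-- The vertex sets 𝔊_i : 𝔊_0 = degree-1 generators, 𝔊_{i+1} = ⋃_{w ∈ 𝔊_i} 𝔄_w. -/
def Gs (I : MonIdeal σ) : ℕ → Set (Mon σ)
  | 0 => {m | m.length = 1}
  | (i+1) => ⋃ w ∈ Gs I i, Ann I w

/-- The vertex set 𝔊 = ⋃_i 𝔊_i of the CPS graph. -/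
def Vertices (I : MonIdeal σ) : Set (Mon σ) := ⋃ i, Gs I i

/-- A walk of length n in Γ(A), encoded by a function giving the vertices
    p 0, p 1, ..., p n (values beyond n are irrelevant). -/
def IsWalk (I : MonIdeal σ) (n : ℕ) (p : ℕ → Mon σ) : Prop :=
  p 0 ∈ Vertices I ∧ ∀ i < n, Edge I (p i) (p (i+1))

/-- An infinite walk in Γ(A). -/
def InfWalk (I : MonIdeal σ) (p : ℕ → Mon σ) : Prop :=
  p 0 ∈ Vertices I ∧ ∀ i, Edge I (p i) (p (i+1))

/-- The reversed tensor product p_n ⊗ p_{n-1} ⊗ ⋯ ⊗ p_0 of the vertices of a walk. -/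
def tens (n : ℕ) (p : ℕ → Mon σ) : Mon σ :=
  (((List.range (n+1)).map p).reverse).flatten

/-- Equivalence of walks of the same length n: equal reversed tensor products. -/
def WEquiv (n : ℕ) (p q : ℕ → Mon σ) : Prop := tens n p = tens n q

/-- A walk is anchored if its first vertex lies in 𝔊_0 (is a degree-1 generator). -/
def Anchored (p : ℕ → Mon σ) : Prop := (p 0).length = 1

/-- A walk is admissible if it is a walk equivalent to an anchored walk. -/
def Admissible (I : MonIdeal σ) (n : ℕ) (p : ℕ → Mon σ) : Prop :=
  IsWalk I n p ∧ ∃ q, IsWalk I n q ∧ Anchored q ∧ WEquiv n p q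

/-- The walk obtained by deleting the first i vertices. -/
def shift (p : ℕ → Mon σ) (i : ℕ) : ℕ → Mon σ := fun t => p (i + t)

end CPS

namespace CPS
/-- A circuit of length n: a closed walk whose first n vertices are distinct. -/
def IsCircuit {σ : Type} (I : MonIdeal σ) (n : ℕ) (p : ℕ → Mon σ) : Prop :=
  0 < n ∧ IsWalk I n p ∧ p n = p 0 ∧ ∀ i < n, ∀ j < n, p i = p j → i = j

/-- The set of directed edges traversed by a walk of length n. -/
def edgeSet {σ : Type} (n : ℕ) (p : ℕ → Mon σ) : Set (Mon σ × Mon σ) :=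
  {e | ∃ i < n, e = (p i, p (i+1))}

/-- Two distinct circuits of Γ(A) sharing a common vertex. -/
def TwoCircuits {σ : Type} (I : MonIdeal σ) : Prop :=
  ∃ n p m q, IsCircuit I n p ∧ IsCircuit I m q ∧
    (∃ i < n, ∃ j < m, p i = q j) ∧ edgeSet n p ≠ edgeSet m q
/-- Anchored walks of length n in Γ(A), recorded as lists of their vertices. -/
def AWalks {σ : Type} (I : MonIdeal σ) (n : ℕ) : Set (List (Mon σ)) :=
  {l | ∃ p : ℕ → Mon σ, IsWalk I n p ∧ Anchored p ∧ l = (List.range (n+1)).map p}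

/-- The number of anchored walks of length n, i.e. dim Ext_A^{n+1}(k,k). -/
noncomputable def growth {σ : Type} (I : MonIdeal σ) (n : ℕ) : ℕ :=
  Set.ncard (AWalks I n)
variable {σ : Type}

/-! ### Basic lemmas -/

/-- The finite set containing all possible walk vertices. -/
def Sfin (I : MonIdeal σ) : Set (Mon σ) :=
  {w | w.length = 1} ∪ {w | ∃ r ∈ I.gens, w <+: r}

lemma Sfin_finite [Finite σ] (I : MonIdeal σ) : (Sfin I).Finite := by
  apply Set.Finite.union
  · have : {w : Mon σ | w.length = 1} ⊆ Set.range (fun x : σ => [x]) := by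
      intro w hw
      obtain ⟨x, rfl⟩ := List.length_eq_one_iff.mp hw
      exact ⟨x, rfl⟩
    exact (Set.finite_range _).subset this
  · have : {w : Mon σ | ∃ r ∈ I.gens, w <+: r} = ⋃ r ∈ (I.gens : Set (Mon σ)), {w | w ∈ r.inits} := by
      ext w; simp [List.mem_inits]
    rw [this]
    exact Set.Finite.biUnion I.gens.finite_toSet (fun r _ => r.inits.finite_toSet)

lemma ann_subset_Sfin {I : MonIdeal σ} {m w : Mon σ} (hw : w ∈ Ann I m) : w ∈ Sfin I := by
  obtain ⟨hm, hwI, ⟨a, r, b, hr, heq⟩, hmin⟩ := hw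
  -- heq : w ++ m = a ++ r ++ b
  have hane : a = [] := by
    by_contra hane
    have hlen : a.length < w.length := by
      by_contra hle
      push_neg at hle
      have p1 : w <+: w ++ m := List.prefix_append w m
      have p2 : a <+: w ++ m := by
        rw [heq, List.append_assoc]; exact List.prefix_append a (r ++ b)
      have h1 : w <+: a := List.prefix_of_prefix_length_le p1 p2 hle
      obtain ⟨a', rfl⟩ := h1
      apply hm
      refine ⟨a', r, b, hr, ?_⟩
      have := heq
      rw [List.append_assoc, List.append_assoc, List.append_right_inj] at this
      simpa using this
    have p1 : a <+: w ++ m := by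
      rw [heq, List.append_assoc]; exact List.prefix_append a (r ++ b)
    have p2 : w <+: w ++ m := List.prefix_append w m
    have h1 : a <+: w := List.prefix_of_prefix_length_le p1 p2 hlen.le
    obtain ⟨w₂, rfl⟩ := h1
    have hw2 : w₂ ≠ a ++ w₂ := by
      intro h
      have h2 : w₂.length = a.length + w₂.length := by
        conv_lhs => rw [h]
        simp
      exact hane (List.eq_nil_of_length_eq_zero (by omega))
    refine hmin w₂ ?_ hw2 ⟨[], r, b, hr, ?_⟩
    · exact ⟨a, rfl⟩
    · rw [List.append_assoc, List.append_assoc, List.append_right_inj] at heq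
      simpa using heq
  subst hane
  simp only [List.nil_append] at heq
  -- heq : w ++ m = r ++ b
  have hwr : w.length < r.length := by
    by_contra hle
    push_neg at hle
    have p1 : r <+: w ++ m := by rw [heq]; exact List.prefix_append r b
    have p2 : w <+: w ++ m := List.prefix_append w m
    have h1 : r <+: w := List.prefix_of_prefix_length_le p1 p2 hle
    obtain ⟨w₂, rfl⟩ := h1
    exact hwI ⟨[], r, w₂, hr, by simp⟩
  right
  refine ⟨r, hr, ?_⟩
  have p1 : w <+: w ++ m := List.prefix_append w m
  have p2 : r <+: w ++ m := by rw [heq]; exact List.prefix_append r b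
  exact List.prefix_of_prefix_length_le p1 p2 hwr.le

lemma edge_gs {I : MonIdeal σ} {m₁ m₂ : Mon σ} {i : ℕ} (h : m₁ ∈ Gs I i)
    (he : Edge I m₁ m₂) : m₂ ∈ Gs I (i+1) := by
  simp only [Gs, Set.mem_iUnion]
  exact ⟨m₁, h, he⟩

lemma walk_vertices {I : MonIdeal σ} {n : ℕ} {p : ℕ → Mon σ} (hw : IsWalk I n p) :
    ∀ t ≤ n, p t ∈ Vertices I := by
  obtain ⟨h0, he⟩ := hw
  obtain ⟨i₀, hi₀⟩ := Set.mem_iUnion.mp h0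
  have key : ∀ t ≤ n, p t ∈ Gs I (i₀ + t) := by
    intro t
    induction t with
    | zero => intro _; simpa using hi₀
    | succ s ih =>
      intro hs
      exact edge_gs (ih (by omega)) (he s (by omega))
  intro t ht
  exact Set.mem_iUnion.mpr ⟨i₀ + t, key t ht⟩

lemma walk_mem_Sfin {I : MonIdeal σ} {n : ℕ} {p : ℕ → Mon σ} (hw : IsWalk I n p)
    (ha : Anchored p) : ∀ t ≤ n, p t ∈ Sfin I := by
  intro t ht
  cases t with
  | zero => exact Or.inl ha
  | succ s => exact ann_subset_Sfin (hw.2 s (by omega))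

lemma finite_lists {α : Type*} {s : Set α} (hs : s.Finite) :
    ∀ n, {l : List α | l.length = n ∧ ∀ x ∈ l, x ∈ s}.Finite := by
  intro n
  induction n with
  | zero =>
    apply Set.Finite.subset (Set.finite_singleton ([] : List α))
    rintro l ⟨hl, -⟩
    simpa using List.eq_nil_of_length_eq_zero hl
  | succ n ih =>
    apply Set.Finite.subset (Set.Finite.image2 List.cons hs ih)
    rintro l ⟨hl, hmem⟩
    cases l with
    | nil => simp at hl
    | cons a l' =>
      refine Set.mem_image2.mpr ⟨a, hmem a (by simp), l', ⟨by simpa using hl, fun x hx => hmem x (by simp [hx])⟩, rfl⟩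

lemma awalks_finite [Finite σ] (I : MonIdeal σ) (n : ℕ) : (AWalks I n).Finite := by
  apply Set.Finite.subset (finite_lists (Sfin_finite I) (n+1))
  rintro l ⟨p, hw, ha, rfl⟩
  constructor
  · simp
  · intro x hx
    simp only [List.mem_map, List.mem_range] at hx
    obtain ⟨t, ht, rfl⟩ := hx
    exact walk_mem_Sfin hw ha t (by omega)


/-! ### From closed walks to circuits -/

lemma closedwalk_circuit {I : MonIdeal σ} :
    ∀ m, 0 < m → ∀ q : ℕ → Mon σ, q 0 ∈ Vertices I → q m = q 0 →
      (∀ s < m, Edge I (q s) (q (s+1))) →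
      ∃ n p, IsCircuit I n p ∧ (q (m-1), q m) ∈ edgeSet n p := by
  intro m
  induction m using Nat.strong_induction_on with
  | _ m IH =>
  intro hm q h0 hc he
  by_cases hdist : ∀ s < m, ∀ t < m, q s = q t → s = t
  · refine ⟨m, q, ⟨hm, ⟨h0, he⟩, hc, hdist⟩, ⟨m-1, by omega, ?_⟩⟩
    rw [Nat.sub_add_cancel hm]
  · push_neg at hdist
    obtain ⟨s₀, hs₀, t₀, ht₀, hq, hne⟩ := hdist
    -- wlog s < t
    obtain ⟨s, t, hst, hsm, htm, hqst⟩ :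
        ∃ s t, s < t ∧ s < m ∧ t < m ∧ q s = q t := by
      rcases Nat.lt_or_ge s₀ t₀ with h | h
      · exact ⟨s₀, t₀, h, hs₀, ht₀, hq⟩
      · exact ⟨t₀, s₀, by omega, ht₀, hs₀, hq.symm⟩
    set m' := m - (t - s) with hm'
    have hm'pos : 0 < m' := by omega
    have hm'lt : m' < m := by omega
    have hm's : s < m' := by omega
    set q' : ℕ → Mon σ := fun u => if u ≤ s then q u else q (u + (t - s)) with hq'
    have hq'0 : q' 0 = q 0 := by simp [hq']
    have hq'm : q' m' = q m := by
      have : ¬ (m' ≤ s) := by omega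
      simp only [hq', this, if_false]
      congr 1
      omega
    have hedges : ∀ u < m', Edge I (q' u) (q' (u+1)) := by
      intro u hu
      rcases Nat.lt_trichotomy u s with h | h | h
      · have h1 : u ≤ s := by omega
        have h2 : u + 1 ≤ s := by omega
        simp only [hq', h1, h2, if_true]
        exact he u (by omega)
      · subst h
        have h2 : ¬ (u + 1 ≤ u) := by omega
        simp only [hq', le_refl, if_true, h2, if_false]
        rw [hqst]
        have : u + 1 + (t - u) = t + 1 := by omega
        rw [this]
        exact he t htm
      · have h1 : ¬ (u ≤ s) := by omega
        have h2 : ¬ (u + 1 ≤ s) := by omega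
        simp only [hq', h1, h2, if_false]
        have : u + 1 + (t - s) = (u + (t-s)) + 1 := by omega
        rw [this]
        exact he (u + (t - s)) (by omega)
    have hlast : q' (m' - 1) = q (m - 1) := by
      rcases Nat.eq_or_lt_of_le (Nat.succ_le_of_lt hm's) with h | h
      · -- m' - 1 = s
        have h1 : m' - 1 = s := by omega
        have h2 : t = m - 1 := by omega
        rw [h1]
        simp only [hq', le_refl, if_true]
        rw [hqst, h2]
      · have h1 : ¬ (m' - 1 ≤ s) := by omega
        simp only [hq', h1, if_false]
        congr 1
        omega
    obtain ⟨n, p, hcirc, hedge⟩ :=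
      IH m' hm'lt hm'pos q' (by rw [hq'0]; exact h0)
        (by rw [hq'm, hq'0]; exact hc) hedges
    refine ⟨n, p, hcirc, ?_⟩
    rwa [hlast, hq'm] at hedge

open Classical in
/-- The unique successor of v along the circuit through v, if any. -/
noncomputable def Fsucc (I : MonIdeal σ) (v : Mon σ) : Mon σ :=
  if h : ∃ u n p, IsCircuit I n p ∧ (v, u) ∈ edgeSet n p then h.choose else []

lemma circuit_succ_unique {I : MonIdeal σ} (hnt : ¬ TwoCircuits I)
    {n₁ : ℕ} {p₁ : ℕ → Mon σ} {n₂ : ℕ} {p₂ : ℕ → Mon σ} {v u₁ u₂ : Mon σ}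
    (h1 : IsCircuit I n₁ p₁) (h2 : IsCircuit I n₂ p₂)
    (he1 : (v, u₁) ∈ edgeSet n₁ p₁) (he2 : (v, u₂) ∈ edgeSet n₂ p₂) : u₁ = u₂ := by
  obtain ⟨i, hi, hei⟩ := he1
  obtain ⟨j, hj, hej⟩ := he2
  have hvi : p₁ i = v := (Prod.ext_iff.mp hei).1.symm
  have hvj : p₂ j = v := (Prod.ext_iff.mp hej).1.symm
  have hsets : edgeSet n₁ p₁ = edgeSet n₂ p₂ := by
    by_contra hne
    exact hnt ⟨n₁, p₁, n₂, p₂, h1, h2, ⟨i, hi, j, hj, by rw [hvi, hvj]⟩, hne⟩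
  have he2' : (v, u₂) ∈ edgeSet n₁ p₁ := by rw [hsets]; exact ⟨j, hj, hej⟩
  obtain ⟨i', hi', hei'⟩ := he2'
  have hvi' : p₁ i' = v := (Prod.ext_iff.mp hei').1.symm
  have : i' = i := h1.2.2.2 i' hi' i hi (by rw [hvi', hvi])
  subst this
  have e1 : u₁ = p₁ (i' + 1) := (Prod.ext_iff.mp hei).2
  have e2 : u₂ = p₁ (i' + 1) := (Prod.ext_iff.mp hei').2
  rw [e1, e2]

lemma Fsucc_eq {I : MonIdeal σ} (hnt : ¬ TwoCircuits I) {n : ℕ} {p : ℕ → Mon σ}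
    {v u : Mon σ} (hc : IsCircuit I n p) (he : (v, u) ∈ edgeSet n p) :
    Fsucc I v = u := by
  have h : ∃ u n p, IsCircuit I n p ∧ (v, u) ∈ edgeSet n p := ⟨u, n, p, hc, he⟩
  classical
  rw [Fsucc, dif_pos h]
  obtain ⟨n₀, p₀, hc₀, he₀⟩ := h.choose_spec
  exact circuit_succ_unique hnt hc₀ hc he₀ he

/-- Determinism: a walk revisiting a vertex must follow the unique circuit. -/
lemma walk_det {I : MonIdeal σ} (hnt : ¬ TwoCircuits I) {n : ℕ} {p : ℕ → Mon σ}
    (hw : IsWalk I n p) {t : ℕ} (ht : t < n) (hold : ∃ s ≤ t, p s = p (t+1)) :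
    p (t+1) = Fsucc I (p t) := by
  obtain ⟨s, hs, hps⟩ := hold
  set m := t + 1 - s with hm
  have hmpos : 0 < m := by omega
  set q : ℕ → Mon σ := fun u => p (s + u) with hqdef
  have h0 : q 0 ∈ Vertices I := by
    simp only [hqdef, Nat.add_zero]
    exact walk_vertices hw s (by omega)
  have hc : q m = q 0 := by
    simp only [hqdef, Nat.add_zero]
    have : s + m = t + 1 := by omega
    rw [this, ← hps]
  have he : ∀ u < m, Edge I (q u) (q (u+1)) := by
    intro u hu
    have : s + (u + 1) = (s + u) + 1 := by omega
    simp only [hqdef, this]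
    exact hw.2 (s + u) (by omega)
  obtain ⟨n', p', hcirc, hedge⟩ := closedwalk_circuit m hmpos q h0 hc he
  have h1 : q (m - 1) = p t := by simp only [hqdef]; congr 1; omega
  have h2 : q m = p (t+1) := by simp only [hqdef]; congr 1; omega
  rw [h1, h2] at hedge
  exact (Fsucc_eq hnt hcirc hedge).symm
/-! ### Encoding walks by first-occurrence data -/

open Classical in
/-- First occurrence (≤ n) of x in the walk p, if any. -/
noncomputable def enc (n : ℕ) (p : ℕ → Mon σ) (x : Mon σ) : Option ℕ :=
  if h : ∃ t, t ≤ n ∧ p t = x then some (Nat.find h) else none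

lemma enc_new {n : ℕ} {p : ℕ → Mon σ} {t : ℕ} (ht : t ≤ n)
    (hnew : ∀ s < t, p s ≠ p t) : enc n p (p t) = some t := by
  classical
  have h : ∃ s, s ≤ n ∧ p s = p t := ⟨t, ht, rfl⟩
  rw [enc, dif_pos h]
  congr 1
  rw [Nat.find_eq_iff]
  exact ⟨⟨ht, rfl⟩, fun s hs hc => hnew s hs hc.2⟩

lemma enc_some {n : ℕ} {p : ℕ → Mon σ} {x : Mon σ} {t : ℕ}
    (h : enc n p x = some t) : t ≤ n ∧ p t = x := by
  classical
  rw [enc] at h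
  split_ifs at h with hex
  obtain ⟨rfl⟩ := Option.some_inj.mp h
  exact Nat.find_spec hex

/-- Two anchored walks with the same first-occurrence data agree. -/
lemma walks_eq {I : MonIdeal σ} (hnt : ¬ TwoCircuits I) {n : ℕ} {p q : ℕ → Mon σ}
    (hp : IsWalk I n p) (hq : IsWalk I n q)
    (hpS : ∀ t ≤ n, p t ∈ Sfin I) (hqS : ∀ t ≤ n, q t ∈ Sfin I)
    (henc : ∀ x ∈ Sfin I, enc n p x = enc n q x) :
    ∀ t ≤ n, p t = q t := by
  intro t
  induction t using Nat.strong_induction_on with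
  | _ t IH =>
  intro ht
  by_cases hnew : ∀ s < t, p s ≠ p t
  · have h1 : enc n p (p t) = some t := enc_new ht hnew
    have h2 : enc n q (p t) = some t := by rw [← henc _ (hpS t ht)]; exact h1
    exact (enc_some h2).2.symm
  by_cases hnew' : ∀ s < t, q s ≠ q t
  · have h1 : enc n q (q t) = some t := enc_new ht hnew'
    have h2 : enc n p (q t) = some t := by rw [henc _ (hqS t ht)]; exact h1
    exact (enc_some h2).2
  -- both old; t ≥ 1
  push_neg at hnew hnew'
  obtain ⟨s, hs, hps⟩ := hnew
  obtain ⟨s', hs', hqs⟩ := hnew'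
  have ht1 : 1 ≤ t := by omega
  obtain ⟨t', rfl⟩ : ∃ t', t = t' + 1 := ⟨t - 1, by omega⟩
  have hdp : p (t' + 1) = Fsucc I (p t') :=
    walk_det hnt hp (by omega) ⟨s, by omega, hps⟩
  have hdq : q (t' + 1) = Fsucc I (q t') :=
    walk_det hnt hq (by omega) ⟨s', by omega, hqs⟩
  rw [hdp, hdq, IH t' (by omega) (by omega)]

/-- Polynomial bound on the number of anchored walks. -/
lemma growth_le [Finite σ] {I : MonIdeal σ} (hnt : ¬ TwoCircuits I) (n : ℕ) :
    growth I n ≤ (n + 2) ^ Nat.card (Sfin I) := by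
  classical
  haveI : Finite (Sfin I) := (Sfin_finite I).to_subtype
  set pl : List (Mon σ) → (ℕ → Mon σ) := fun l t => l.getD t [] with hpl
  have plspec : ∀ l ∈ AWalks I n, IsWalk I n (pl l) ∧ Anchored (pl l) ∧
      l = (List.range (n+1)).map (pl l) := by
    rintro l ⟨p, hw, ha, rfl⟩
    have hval : ∀ t ≤ n, pl ((List.range (n+1)).map p) t = p t := by
      intro t ht
      have hlt : t < ((List.range (n+1)).map p).length := by simp; omega
      simp only [hpl]
      rw [List.getD_eq_getElem _ _ hlt]
      simp
    refine ⟨⟨by rw [hval 0 (by omega)]; exact hw.1, ?_⟩, ?_, ?_⟩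
    · intro i hi
      rw [hval i (by omega), hval (i+1) (by omega)]
      exact hw.2 i hi
    · unfold Anchored
      rw [hval 0 (by omega)]
      exact ha
    · apply List.ext_getElem (by simp)
      intro i h1 h2
      have hi : i < n + 1 := by simpa using h1
      simp only [List.getElem_map, List.getElem_range]
      rw [hval i (by omega)]
  set Θ : List (Mon σ) → ((Sfin I) → Option (Fin (n+1))) := fun l x =>
    (enc n (pl l) x.1).bind (fun t => if h : t < n + 1 then some ⟨t, h⟩ else none) with hΘ
  have hinj : Set.InjOn Θ (AWalks I n) := by
    intro l₁ h₁ l₂ h₂ heq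
    obtain ⟨hw₁, ha₁, hl₁⟩ := plspec l₁ h₁
    obtain ⟨hw₂, ha₂, hl₂⟩ := plspec l₂ h₂
    have henc : ∀ x ∈ Sfin I, enc n (pl l₁) x = enc n (pl l₂) x := by
      intro x hx
      have := congrFun heq ⟨x, hx⟩
      simp only [hΘ] at this
      rcases he1 : enc n (pl l₁) x with _ | t1 <;> rcases he2 : enc n (pl l₂) x with _ | t2
      · rfl
      · rw [he1, he2] at this
        have ht2 : t2 ≤ n := (enc_some he2).1
        simp [Nat.lt_succ_of_le ht2, ht2] at this
      · rw [he1, he2] at this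
        have ht1 : t1 ≤ n := (enc_some he1).1
        simp [Nat.lt_succ_of_le ht1, ht1] at this
      · rw [he1, he2] at this
        have ht1 : t1 ≤ n := (enc_some he1).1
        have ht2 : t2 ≤ n := (enc_some he2).1
        simp [Nat.lt_succ_of_le ht1, Nat.lt_succ_of_le ht2, ht1, ht2] at this
        rw [this]
    have hpts := walks_eq hnt hw₁ hw₂ (walk_mem_Sfin hw₁ ha₁) (walk_mem_Sfin hw₂ ha₂) henc
    rw [hl₁, hl₂]
    apply List.map_congr_left
    intro i hi
    exact hpts i (by simp at hi; omega)
  calc growth I n = (Θ '' AWalks I n).ncard := (Set.ncard_image_of_injOn hinj).symm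
    _ ≤ (Set.univ : Set ((Sfin I) → Option (Fin (n+1)))).ncard :=
        Set.ncard_le_ncard (Set.subset_univ _) Set.finite_univ
    _ = Nat.card ((Sfin I) → Option (Fin (n+1))) := Set.ncard_univ _
    _ = (n + 2) ^ Nat.card (Sfin I) := by
        rw [Nat.card_fun, Finite.card_option, Nat.card_eq_fintype_card, Fintype.card_fin]

/-- Assuming no two circuits share a vertex, partial sums are polynomially bounded. -/
lemma poly_bound [Finite σ] {I : MonIdeal σ} (hnt : ¬ TwoCircuits I) :
    ∃ c d : ℕ, ∀ n : ℕ, (Finset.range (n+1)).sum (growth I) ≤ c * (n+1) ^ d := by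
  set M := Nat.card (Sfin I) with hM
  refine ⟨2 ^ M, M + 1, fun n => ?_⟩
  have h1 : (Finset.range (n+1)).sum (growth I) ≤ (n+1) * ((n+2) ^ M) := by
    calc (Finset.range (n+1)).sum (growth I)
        ≤ (Finset.range (n+1)).sum (fun _ => (n+2) ^ M) := by
          apply Finset.sum_le_sum
          intro i hi
          calc growth I i ≤ (i + 2) ^ M := growth_le hnt i
            _ ≤ (n + 2) ^ M := Nat.pow_le_pow_left (by simp at hi; omega) M
      _ = (n+1) * ((n+2) ^ M) := by simp [Finset.sum_const, mul_comm]
  calc (Finset.range (n+1)).sum (growth I) ≤ (n+1) * ((n+2) ^ M) := h1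
    _ ≤ (n+1) * ((2 * (n+1)) ^ M) := by
        apply Nat.mul_le_mul_left
        exact Nat.pow_le_pow_left (by omega) M
    _ = 2 ^ M * (n+1) ^ (M+1) := by rw [mul_pow]; ring

/-! ### Two circuits imply exponential growth -/

lemma exists_anchor {I : MonIdeal σ} :
    ∀ L (v : Mon σ), v ∈ Gs I L → ∃ w, IsWalk I L w ∧ Anchored w ∧ w L = v := by
  intro L
  induction L with
  | zero =>
    intro v hv
    refine ⟨fun _ => v, ⟨Set.mem_iUnion.mpr ⟨0, hv⟩, fun i hi => absurd hi (by omega)⟩, hv, rfl⟩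
  | succ L ih =>
    intro v hv
    simp only [Gs, Set.mem_iUnion] at hv
    obtain ⟨u, hu, hann⟩ := hv
    obtain ⟨w, hwW, hwA, hwL⟩ := ih u hu
    refine ⟨fun t => if t ≤ L then w t else v, ⟨?_, ?_⟩, ?_, ?_⟩
    · simpa using hwW.1
    · intro t htk
      by_cases h1 : t + 1 ≤ L
      · simp only [show t ≤ L by omega, h1, if_true]
        exact hwW.2 t (by omega)
      · have ht : t = L := by omega
        subst ht
        simp only [le_refl, if_true, h1, if_false]
        rw [hwL]
        exact hann
    · simpa [Anchored] using hwA
    · simp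

lemma mod_succ_mod (t n : ℕ) : (t + 1) % n = (t % n + 1) % n := by
  conv_lhs => rw [← Nat.div_add_mod t n]
  rw [Nat.add_assoc, Nat.mul_add_mod]

lemma rot_edge {I : MonIdeal σ} {n : ℕ} {p : ℕ → Mon σ} (hn : 0 < n)
    (hc : p n = p 0) (he : ∀ s < n, Edge I (p s) (p (s+1))) :
    ∀ t, Edge I (p (t % n)) (p ((t+1) % n)) := by
  intro t
  have hs : t % n < n := Nat.mod_lt _ hn
  have h1 : (t+1) % n = (t % n + 1) % n := mod_succ_mod t n
  rcases Nat.lt_or_ge (t % n + 1) n with h | h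
  · rw [h1, Nat.mod_eq_of_lt h]
    exact he _ hs
  · have h' : t % n + 1 = n := by omega
    have he' : Edge I (p (t % n)) (p n) := by
      have := he (t % n) hs
      rwa [h'] at this
    rw [h1, h', Nat.mod_self, ← hc]
    exact he'

lemma mod_add_cancel (s n i : ℕ) (hi : i ≤ n) : (i + (s + n - i)) % n = s % n := by
  have h : i + (s + n - i) = s + n := by omega
  rw [h, Nat.add_mod_right]

lemma edgeSet_rot {n : ℕ} {p : ℕ → Mon σ} (hn : 0 < n) (hc : p n = p 0)
    {i : ℕ} (hi : i < n) :
    edgeSet n p = {e | ∃ t < n, e = (p ((i + t) % n), p ((i + t + 1) % n))} := by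
  have key : ∀ s < n, p ((s + 1) % n) = p (s + 1) := by
    intro s hs
    rcases Nat.lt_or_ge (s + 1) n with h | h
    · rw [Nat.mod_eq_of_lt h]
    · have h' : s + 1 = n := by omega
      rw [h', Nat.mod_self, hc]
  ext e
  constructor
  · rintro ⟨s, hs, rfl⟩
    refine ⟨(s + n - i) % n, Nat.mod_lt _ hn, ?_⟩
    have hmm : (i + (s + n - i) % n) % n = s := by
      rw [Nat.add_mod i, Nat.mod_mod_of_dvd _ dvd_rfl, ← Nat.add_mod,
          (show i + (s + n - i) = s + n by omega), Nat.add_mod_right, Nat.mod_eq_of_lt hs]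
    have h2 : (i + (s + n - i) % n + 1) % n = (s + 1) % n := by
      rw [mod_succ_mod, hmm]
    rw [hmm, h2, key s hs]
  · rintro ⟨t, ht, rfl⟩
    have hs : (i + t) % n < n := Nat.mod_lt _ hn
    refine ⟨(i + t) % n, hs, ?_⟩
    have h2 : (i + t + 1) % n = ((i + t) % n + 1) % n := mod_succ_mod _ n
    rw [h2, key _ hs]

lemma pow_beats (c d : ℕ) : ∃ k, c * (k+1) ^ d < 2 ^ k := by
  set m := c * (d+1) ^ d with hm
  refine ⟨(d+1) * m, ?_⟩
  have h2m : m + 1 ≤ 2 ^ m := Nat.lt_two_pow_self (n := m)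
  have hpos : 0 < (m+1) ^ d := pow_pos (by omega) d
  calc c * ((d+1)*m+1) ^ d ≤ c * ((d+1)*(m+1)) ^ d := by
        apply Nat.mul_le_mul_left
        apply Nat.pow_le_pow_left
        rw [Nat.mul_succ]
        omega
    _ = (c * (d+1) ^ d) * (m+1) ^ d := by rw [mul_pow]; ring
    _ = m * (m+1) ^ d := by rw [← hm]
    _ < (m+1) * (m+1) ^ d := by
        exact mul_lt_mul_of_pos_right (Nat.lt_succ_self m) hpos
    _ = (m+1) ^ (d+1) := by rw [pow_succ]; ring
    _ ≤ (2 ^ m) ^ (d+1) := Nat.pow_le_pow_left h2m (d+1)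
    _ = 2 ^ (m * (d+1)) := (pow_mul 2 m (d+1)).symm
    _ = 2 ^ ((d+1) * m) := by rw [Nat.mul_comm]

lemma two_circuits_unbounded [Finite σ] {I : MonIdeal σ} (htc : TwoCircuits I) :
    ¬ ∃ c d : ℕ, ∀ n : ℕ, (Finset.range (n+1)).sum (growth I) ≤ c * (n+1) ^ d := by
  classical
  obtain ⟨n, p, m, q, hp, hq, ⟨i, hi, j, hj, hv⟩, hne⟩ := htc
  obtain ⟨hn, hpw, hpc, hpd⟩ := hp
  obtain ⟨hm, hqw, hqc, hqd⟩ := hq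
  set v : Mon σ := p i with hvdef
  set pe : ℕ → Mon σ := fun t => p ((i + t) % n) with hpe
  set qe : ℕ → Mon σ := fun t => q ((j + t) % m) with hqe
  have hpe0 : pe 0 = v := by simp [hpe, Nat.mod_eq_of_lt hi, hvdef]
  have hqe0 : qe 0 = v := by simp [hqe, Nat.mod_eq_of_lt hj, hv]
  have hpen : pe n = v := by simp [hpe, Nat.add_mod_right, Nat.mod_eq_of_lt hi, hvdef]
  have hqem : qe m = v := by simp [hqe, Nat.add_mod_right, Nat.mod_eq_of_lt hj, hv]
  have hpeE : ∀ t, Edge I (pe t) (pe (t+1)) := fun t => rot_edge hn hpc hpw.2 (i + t)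
  have hqeE : ∀ t, Edge I (qe t) (qe (t+1)) := fun t => rot_edge hm hqc hqw.2 (j + t)
  set ℓ : ℕ := n + m with hldef
  have hl : 0 < ℓ := by omega
  set Bl : Bool → ℕ → Mon σ := fun c t =>
    if c then (if t < n then pe t else qe (t - n)) else (if t < m then qe t else pe (t - m))
    with hBl
  have hBl0 : ∀ c, Bl c 0 = v := by
    intro c
    cases c <;> simp [hBl, hn, hm, hpe0, hqe0]
  have hBlE : ∀ c t, t + 1 < ℓ → Edge I (Bl c t) (Bl c (t+1)) := by
    intro c t htl
    cases c
    · by_cases h1 : t + 1 < m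
      · have e1 : Bl false t = qe t := by simp [hBl, show t < m by omega]
        have e2 : Bl false (t+1) = qe (t+1) := by simp [hBl, h1]
        rw [e1, e2]; exact hqeE t
      · by_cases h2 : t + 1 = m
        · have e1 : Bl false t = qe t := by simp [hBl, show t < m by omega]
          have e2 : Bl false (t+1) = qe (t+1) := by
            have e3 : Bl false (t+1) = pe (t+1-m) := by simp [hBl, h1]
            rw [e3, show t+1-m = 0 by omega, hpe0, h2]
            exact hqem.symm
          rw [e1, e2]; exact hqeE t
        · have h3 : m ≤ t := by omega
          have e1 : Bl false t = pe (t - m) := by simp [hBl, show ¬ (t < m) by omega]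
          have e2 : Bl false (t+1) = pe ((t-m)+1) := by
            have e3 : Bl false (t+1) = pe (t+1-m) := by simp [hBl, show ¬ (t+1 < m) by omega]
            rw [e3, show t+1-m = (t-m)+1 by omega]
          rw [e1, e2]; exact hpeE (t-m)
    · by_cases h1 : t + 1 < n
      · have e1 : Bl true t = pe t := by simp [hBl, show t < n by omega]
        have e2 : Bl true (t+1) = pe (t+1) := by simp [hBl, h1]
        rw [e1, e2]; exact hpeE t
      · by_cases h2 : t + 1 = n
        · have e1 : Bl true t = pe t := by simp [hBl, show t < n by omega]
          have e2 : Bl true (t+1) = pe (t+1) := by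
            have e3 : Bl true (t+1) = qe (t+1-n) := by simp [hBl, h1]
            rw [e3, show t+1-n = 0 by omega, hqe0, h2]
            exact hpen.symm
          rw [e1, e2]; exact hpeE t
        · have h3 : n ≤ t := by omega
          have e1 : Bl true t = qe (t - n) := by simp [hBl, show ¬ (t < n) by omega]
          have e2 : Bl true (t+1) = qe ((t-n)+1) := by
            have e3 : Bl true (t+1) = qe (t+1-n) := by simp [hBl, show ¬ (t+1 < n) by omega]
            rw [e3, show t+1-n = (t-n)+1 by omega]
          rw [e1, e2]; exact hqeE (t-n)
  have hBlL : ∀ c, Edge I (Bl c (ℓ - 1)) v := by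
    intro c
    cases c
    · have e1 : Bl false (ℓ-1) = pe (n-1) := by
        have hnot : ¬ (ℓ - 1 < m) := by omega
        simp [hBl, hnot, show ℓ-1-m = n-1 by omega]
      have h := hpeE (n-1)
      rw [show (n-1)+1 = n by omega, hpen] at h
      rw [e1]; exact h
    · have e1 : Bl true (ℓ-1) = qe (m-1) := by
        have hnot : ¬ (ℓ - 1 < n) := by omega
        simp [hBl, hnot, show ℓ-1-n = m-1 by omega]
      have h := hqeE (m-1)
      rw [show (m-1)+1 = m by omega, hqem] at h
      rw [e1]; exact h
  have hBlne : ∃ t₀, t₀ < ℓ ∧ Bl true t₀ ≠ Bl false t₀ := by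
    rcases lt_trichotomy n m with hcmp | hcmp | hcmp
    · refine ⟨n, by omega, ?_⟩
      have e1 : Bl true n = v := by simp [hBl, hqe0]
      have e2 : Bl false n = qe n := by simp [hBl, hcmp]
      rw [e1, e2]
      intro hvq
      have hq2 : q ((j + n) % m) = q j := by
        have : qe n = qe 0 := by rw [hqe0, ← hvq]
        simpa [hqe, Nat.mod_eq_of_lt hj] using this
      have hjm : (j + n) % m = j := hqd _ (Nat.mod_lt _ hm) _ hj hq2
      have hd := Nat.div_add_mod (j + n) m
      rw [hjm] at hd
      have hnm : n = m * ((j+n)/m) := by omega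
      rcases Nat.eq_zero_or_pos ((j+n)/m) with h0 | h0
      · rw [h0] at hnm; simp at hnm; omega
      · have : m * 1 ≤ m * ((j+n)/m) := Nat.mul_le_mul_left m h0
        omega
    · by_contra hall
      push_neg at hall
      have hpeqe : ∀ t, t ≤ n → pe t = qe t := by
        intro t ht
        rcases Nat.lt_or_ge t n with h | h
        · have hbt := hall t (by omega)
          have e1 : Bl true t = pe t := by simp [hBl, h]
          have e2 : Bl false t = qe t := by simp [hBl, show t < m by omega]
          rw [e1, e2] at hbt; exact hbt
        · have ht' : t = n := by omega
          rw [ht', hpen]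
          rw [hcmp]
          exact hqem.symm
      apply hne
      rw [edgeSet_rot hn hpc hi, edgeSet_rot hm hqc hj]
      ext e
      simp only [Set.mem_setOf_eq]
      constructor
      · rintro ⟨t, ht, rfl⟩
        refine ⟨t, by omega, ?_⟩
        rw [show p ((i+t) % n) = pe t from rfl, show p ((i+t+1) % n) = pe (t+1) from rfl,
            show q ((j+t) % m) = qe t from rfl, show q ((j+t+1) % m) = qe (t+1) from rfl,
            hpeqe t (by omega), hpeqe (t+1) (by omega)]
      · rintro ⟨t, ht, rfl⟩
        refine ⟨t, by omega, ?_⟩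
        rw [show p ((i+t) % n) = pe t from rfl, show p ((i+t+1) % n) = pe (t+1) from rfl,
            show q ((j+t) % m) = qe t from rfl, show q ((j+t+1) % m) = qe (t+1) from rfl,
            hpeqe t (by omega), hpeqe (t+1) (by omega)]
    · refine ⟨m, by omega, ?_⟩
      have e1 : Bl true m = pe m := by simp [hBl, hcmp]
      have e2 : Bl false m = v := by simp [hBl, hpe0]
      rw [e1, e2]
      intro hpq
      have hp2 : p ((i + m) % n) = p i := by
        have : pe m = pe 0 := by rw [hpe0, hpq]
        simpa [hpe, Nat.mod_eq_of_lt hi] using this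
      have him : (i + m) % n = i := hpd _ (Nat.mod_lt _ hn) _ hi hp2
      have hd := Nat.div_add_mod (i + m) n
      rw [him] at hd
      have hnm : m = n * ((i+m)/n) := by omega
      rcases Nat.eq_zero_or_pos ((i+m)/n) with h0 | h0
      · rw [h0] at hnm; simp at hnm; omega
      · have : n * 1 ≤ n * ((i+m)/n) := Nat.mul_le_mul_left n h0
        omega
  -- anchor
  have hvV : v ∈ Vertices I := walk_vertices hpw i hi.le
  obtain ⟨L, hL⟩ := Set.mem_iUnion.mp hvV
  obtain ⟨w, hwW, hwA, hwL⟩ := exists_anchor L v hL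
  obtain ⟨t₀, ht₀l, ht₀ne⟩ := hBlne
  set W : (ℕ → Bool) → ℕ → Mon σ :=
    fun s t => if t < L then w t else Bl (s ((t - L) / ℓ)) ((t - L) % ℓ) with hW
  have hWval : ∀ s u, W s (L + u) = Bl (s (u / ℓ)) (u % ℓ) := by
    intro s u
    simp [hW, show ¬ (L + u < L) by omega, Nat.add_sub_cancel_left]
  have hWedge : ∀ s t, Edge I (W s t) (W s (t+1)) := by
    intro s t
    rcases Nat.lt_or_ge (t+1) L with h1 | h1
    · have e1 : W s t = w t := by simp [hW, show t < L by omega]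
      have e2 : W s (t+1) = w (t+1) := by simp [hW, h1]
      rw [e1, e2]; exact hwW.2 t (by omega)
    · rcases Nat.lt_or_ge t L with h2 | h2
      · have hL1 : t + 1 = L := by omega
        have e1 : W s t = w t := by simp [hW, h2]
        have e2 : W s (t+1) = v := by
          have e3 : W s (t+1) = Bl (s (((t+1) - L)/ℓ)) (((t+1)-L) % ℓ) := by
            simp [hW, show ¬ (t+1 < L) by omega]
          rw [e3, hL1]
          simp [hBl0]
        rw [e1, e2, ← hwL, ← hL1]
        exact hwW.2 t (by omega)
      · obtain ⟨u, rfl⟩ : ∃ u, t = L + u := ⟨t - L, by omega⟩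
        have hdm := Nat.div_add_mod u ℓ
        have hr : u % ℓ < ℓ := Nat.mod_lt _ hl
        rcases Nat.lt_or_ge (u % ℓ + 1) ℓ with h3 | h3
        · have hmod : (u+1) % ℓ = u % ℓ + 1 := by
            rw [mod_succ_mod, Nat.mod_eq_of_lt h3]
          have hdiv : (u+1) / ℓ = u / ℓ := by
            rw [show u + 1 = ℓ * (u / ℓ) + (u % ℓ + 1) by omega]
            rw [Nat.mul_add_div hl, Nat.div_eq_of_lt h3]
            omega
          have e1 := hWval s u
          have e2 : W s (L + u + 1) = Bl (s (u / ℓ)) (u % ℓ + 1) := by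
            rw [show L + u + 1 = L + (u+1) from rfl, hWval s (u+1), hmod, hdiv]
          rw [e1, e2]
          exact hBlE _ _ (by omega)
        · have h4 : u % ℓ + 1 = ℓ := by omega
          have hu1 : u + 1 = ℓ * (u / ℓ + 1) := by rw [Nat.mul_add, Nat.mul_one]; omega
          have hmod : (u+1) % ℓ = 0 := by rw [hu1, Nat.mul_mod_right]
          have e2 : W s (L + u + 1) = v := by
            rw [show L + u + 1 = L + (u+1) from rfl, hWval s (u+1), hmod, hBl0]
          rw [hWval s u, e2, show u % ℓ = ℓ - 1 by omega]
          exact hBlL _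
  have hW0 : ∀ s, W s 0 = w 0 := by
    intro s
    rcases Nat.eq_zero_or_pos L with h | h
    · have e1 : W s 0 = Bl (s 0) 0 := by simp [hW, h]
      rw [e1, hBl0, ← hwL, h]
    · simp [hW, h]
  have hWwalk : ∀ s k, IsWalk I (L + ℓ * k) (W s) ∧ Anchored (W s) := by
    intro s k
    refine ⟨⟨?_, fun t _ => hWedge s t⟩, ?_⟩
    · rw [hW0]; exact hwW.1
    · show (W s 0).length = 1
      rw [hW0]; exact hwA
  have hcount : ∀ k, 2 ^ k ≤ growth I (L + ℓ * k) := by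
    intro k
    set N := L + ℓ * k with hN
    set ext : (Fin k → Bool) → (ℕ → Bool) :=
      fun s b => if h : b < k then s ⟨b, h⟩ else false with hext
    set G : (Fin k → Bool) → List (Mon σ) :=
      fun s => (List.range (N+1)).map (W (ext s)) with hG
    have hGmem : Set.range G ⊆ AWalks I N := by
      rintro l ⟨s, rfl⟩
      exact ⟨W (ext s), (hWwalk (ext s) k).1, (hWwalk (ext s) k).2, rfl⟩
    have hGinj : Function.Injective G := by
      intro s₁ s₂ hGs
      funext b
      by_contra hb
      have hbval : (b : ℕ) < k := b.2
      have hlt : ℓ * (b : ℕ) + t₀ < ℓ * k := by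
        calc ℓ * (b:ℕ) + t₀ < ℓ * (b:ℕ) + ℓ := by omega
          _ = ℓ * ((b:ℕ)+1) := by ring
          _ ≤ ℓ * k := Nat.mul_le_mul_left ℓ (by omega)
      set t := L + (ℓ * (b : ℕ) + t₀) with ht
      have htN : t < N + 1 := by omega
      have hget : W (ext s₁) t = W (ext s₂) t := by
        have hcg := congrArg (fun l => l[t]?) hGs
        simpa [hG, List.getElem?_map, List.getElem?_range, htN] using hcg
      have hdiv : (ℓ * (b:ℕ) + t₀) / ℓ = (b : ℕ) := by
        rw [Nat.mul_add_div hl, Nat.div_eq_of_lt ht₀l]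
        omega
      have hmod : (ℓ * (b:ℕ) + t₀) % ℓ = t₀ := by
        rw [Nat.mul_add_mod, Nat.mod_eq_of_lt ht₀l]
      rw [ht, hWval, hWval, hdiv, hmod] at hget
      have hextb : ∀ s : Fin k → Bool, ext s (b : ℕ) = s b := by
        intro s; simp [hext, hbval]
      rw [hextb, hextb] at hget
      rcases Bool.eq_false_or_eq_true (s₁ b) with hb1 | hb1 <;>
        rcases Bool.eq_false_or_eq_true (s₂ b) with hb2 | hb2
      · exact hb (hb1.trans hb2.symm)
      · rw [hb1, hb2] at hget
        exact ht₀ne hget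
      · rw [hb1, hb2] at hget
        exact ht₀ne hget.symm
      · exact hb (hb1.trans hb2.symm)
    have h1 : (Set.range G).ncard ≤ (AWalks I N).ncard :=
      Set.ncard_le_ncard hGmem (awalks_finite I N)
    have h2 : (Set.range G).ncard = 2 ^ k := by
      rw [← Nat.card_coe_set_eq, Nat.card_range_of_injective hGinj, Nat.card_fun]
      simp [Nat.card_eq_fintype_card]
    show 2 ^ k ≤ (AWalks I N).ncard
    rw [← h2]; exact h1
  rintro ⟨c, d, hcd⟩
  obtain ⟨k, hk⟩ := pow_beats (c * (L + ℓ + 1) ^ d) d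
  have hb1 : 2 ^ k ≤ growth I (L + ℓ * k) := hcount k
  have hb2 : growth I (L + ℓ * k) ≤ (Finset.range (L + ℓ * k + 1)).sum (growth I) :=
    Finset.single_le_sum (fun i _ => Nat.zero_le _) (Finset.self_mem_range_succ _)
  have hb3 := hcd (L + ℓ * k)
  have hb4 : (L + ℓ * k + 1) ^ d ≤ ((L + ℓ + 1) * (k + 1)) ^ d := by
    apply Nat.pow_le_pow_left
    calc L + ℓ * k + 1 ≤ (L + ℓ + 1) * k + (L + ℓ + 1) := by
          have : ℓ * k ≤ (L + ℓ + 1) * k := Nat.mul_le_mul_right k (by omega)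
          omega
      _ = (L + ℓ + 1) * (k + 1) := by ring
  have hfin : 2 ^ k ≤ c * (L + ℓ + 1) ^ d * (k+1) ^ d := by
    calc 2 ^ k ≤ c * (L + ℓ * k + 1) ^ d := le_trans (le_trans hb1 hb2) hb3
      _ ≤ c * ((L + ℓ + 1) * (k + 1)) ^ d := Nat.mul_le_mul_left c hb4
      _ = c * (L + ℓ + 1) ^ d * (k+1) ^ d := by rw [mul_pow]; ring
  omega


/-- Corollary 2.9(2): GKdim E(A) = ∞ iff Γ(A) contains two distinct circuits
    with a common vertex. (GKdim E(A) < ∞ iff the dimension partial sums of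
    E(A) are polynomially bounded.) -/
theorem stmt10 {σ : Type} [Finite σ] (I : MonIdeal σ) :
    (¬ ∃ c d : ℕ, ∀ n : ℕ,
        (Finset.range (n+1)).sum (growth I) ≤ c * (n+1) ^ d) ↔
      TwoCircuits I := by
  constructor
  · intro h
    by_contra hnt
    exact h (poly_bound hnt)
  · intro htc
    exact two_circuits_unbounded htc
end CPS
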